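/- arXiv:1611.07713 — 2 statements merged into one kernel-verified Lean document; each statement's English description precedes it below -/
import Mathlib

section
/- There exist positive real algebraic numbers a, b, c with a ≠ 1 and b ≠ 1 such that a^(a^a) * b^(b^b) = c^(c^c); namely a = b = 1/2 and c = 1/4. -/
theorem stmt_15 :
    ∃ a b c : ℝ, 0 < a ∧ 0 < b ∧ 0 < c ∧
      IsAlgebraic ℚ a ∧ IsAlgebraic ℚ b ∧ IsAlgebraic ℚ c ∧
      a ≠ 1 ∧ b ≠ 1 ∧ a ^ (a ^ a) * b ^ (b ^ b) = c ^ (c ^ c) ∧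
      a = 1/2 ∧ b = 1/2 ∧ c = 1/4 := by
  refine ⟨1/2, 1/2, 1/4, by norm_num, by norm_num, by norm_num, ?_, ?_, ?_, by norm_num,
    by norm_num, ?_, rfl, rfl, rfl⟩
  · have := isAlgebraic_algebraMap (R := ℚ) (A := ℝ) (1/2)
    simpa using this
  · have := isAlgebraic_algebraMap (R := ℚ) (A := ℝ) (1/2)
    simpa using this
  · have := isAlgebraic_algebraMap (R := ℚ) (A := ℝ) (1/4)
    simpa using this
  · have hc : ((1/4:ℝ)) = (1/2:ℝ) ^ (2:ℝ) := by
      rw [Real.rpow_two]; norm_num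
    have h1 : ((1/4:ℝ)) ^ ((1/4):ℝ) = (1/2:ℝ) ^ ((1/2):ℝ) := by
      rw [hc, ← Real.rpow_mul (by norm_num : (0:ℝ) ≤ 1/2)]
      norm_num
    rw [h1, hc, ← Real.rpow_mul (by norm_num : (0:ℝ) ≤ 1/2),
      ← Real.rpow_add (by norm_num : (0:ℝ) < 1/2)]
    ring_nf
end

section
/- There exist positive real algebraic numbers a, b, c with a ≠ 1 and b ≠ 1 such that a^a * b^b = c^(c^c); namely a = b = 1/sqrt 2 and c = 1/2. -/
lemma alg_sqrt2 : IsAlgebraic ℚ (Real.sqrt 2) := by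
  refine ⟨Polynomial.X ^ 2 - Polynomial.C 2, ?_, ?_⟩
  · intro h
    have := congrArg (Polynomial.coeff · 2) h
    simp at this
  · have h2 : (0:ℝ) ≤ 2 := by norm_num
    simp [Real.sq_sqrt h2]

theorem stmt_16 :
    ∃ a b c : ℝ, 0 < a ∧ 0 < b ∧ 0 < c ∧
      IsAlgebraic ℚ a ∧ IsAlgebraic ℚ b ∧ IsAlgebraic ℚ c ∧
      a ≠ 1 ∧ b ≠ 1 ∧ a ^ a * b ^ b = c ^ (c ^ c) ∧
      a = 1/Real.sqrt 2 ∧ b = 1/Real.sqrt 2 ∧ c = 1/2 := by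
  have hs : Real.sqrt 2 > 0 := Real.sqrt_pos.mpr (by norm_num)
  have hs1 : Real.sqrt 2 ≠ 1 := by
    intro h
    have := Real.sq_sqrt (by norm_num : (0:ℝ) ≤ 2)
    rw [h] at this; norm_num at this
  refine ⟨1/Real.sqrt 2, 1/Real.sqrt 2, 1/2, by positivity, by positivity, by norm_num,
    ?_, ?_, ?_, ?_, ?_, ?_, rfl, rfl, rfl⟩
  · simpa [one_div] using alg_sqrt2.inv
  · simpa [one_div] using alg_sqrt2.inv
  · have := isAlgebraic_rat ℚ (A := ℝ) (1/2)
    norm_num at this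
    exact this
  · intro h
    rw [div_eq_one_iff_eq (ne_of_gt hs)] at h
    exact hs1 h.symm
  · intro h
    rw [div_eq_one_iff_eq (ne_of_gt hs)] at h
    exact hs1 h.symm
  · -- (1/√2)^(1/√2) * (1/√2)^(1/√2) = (1/2)^((1/2)^(1/2))
    have hpos : (0:ℝ) ≤ 1/Real.sqrt 2 := by positivity
    have key : (1/Real.sqrt 2 : ℝ) = (1/2 : ℝ) ^ ((1:ℝ)/2) := by
      rw [← Real.sqrt_eq_rpow, show (1:ℝ)/2 = (2:ℝ)⁻¹ by norm_num, Real.sqrt_inv, one_div]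
    have h12 : ((1:ℝ)/2) ^ ((1:ℝ)/2) = 1/Real.sqrt 2 := key.symm
    rw [← Real.rpow_add (by positivity)]
    rw [key]
    rw [← Real.rpow_mul (by norm_num)]
    congr 1
    rw [h12]
    ring
end
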